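/- (Partition lemma, part ii.) For every integer d ≥ 1 there exists a constant C > 0, depending only on d, with the following property. Let S be a finite set of n points of ℝ^d and let r be an integer with 1 ≤ r ≤ n. Then there exists a partition Π of S into at most r pairwise disjoint subsets, each of cardinality at most ⌈n/r⌉, such that for every axis-aligned box B ⊆ ℝ^d, the number of points of S ∩ B that belong to subsets of Π not fully contained in B is at most min{|S ∩ B|, C · n / r^{1/d}}. -/

import Mathlib

open scoped Classical

namespace PLem
variable {α : Type*} {β : Type*}

def chunk (q : ℕ) : List α → List (List α)
  | [] => []
  | x :: xs => (x :: xs.take (q-1)) :: chunk q (xs.drop (q-1))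
  termination_by l => l.length
  decreasing_by simp

@[simp] lemma chunk_nil (q : ℕ) : chunk q ([] : List α) = [] := by rw [chunk.eq_1]

lemma chunk_cons (q : ℕ) (x : α) (xs : List α) :
    chunk q (x :: xs) = (x :: xs.take (q-1)) :: chunk q (xs.drop (q-1)) := by
  rw [chunk.eq_2]

lemma chunk_flatten_aux (q : ℕ) : ∀ (n : ℕ) (l : List α), l.length ≤ n →
    (chunk q l).flatten = l := by
  intro n
  induction n with
  | zero =>
    intro l hl
    have : l = [] := List.length_eq_zero_iff.1 (Nat.le_zero.1 hl)
    subst this; simp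
  | succ n ih =>
    intro l hl
    match l with
    | [] => simp
    | x :: xs =>
      rw [chunk_cons]
      simp only [List.flatten_cons]
      rw [ih (xs.drop (q-1)) (by simp at hl ⊢; omega)]
      simp [List.cons_append, List.take_append_drop]

lemma chunk_flatten (q : ℕ) (l : List α) : (chunk q l).flatten = l :=
  chunk_flatten_aux q l.length l le_rfl

lemma mem_chunk_aux (q : ℕ) : ∀ (n : ℕ) (l : List α), l.length ≤ n →
    ∀ c ∈ chunk q l, c ≠ [] ∧ (1 ≤ q → c.length ≤ q) := by
  intro n
  induction n with
  | zero =>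
    intro l hl
    have : l = [] := List.length_eq_zero_iff.1 (Nat.le_zero.1 hl)
    subst this; simp
  | succ n ih =>
    intro l hl c hc
    match l with
    | [] => simp at hc
    | x :: xs =>
      rw [chunk_cons] at hc
      rcases List.mem_cons.1 hc with h | h
      · subst h
        refine ⟨by simp, fun hq => ?_⟩
        simp only [List.length_cons]
        have := List.length_take_le (q-1) xs
        omega
      · exact ih (xs.drop (q-1)) (by simp at hl ⊢; omega) c h

lemma mem_chunk_ne_nil {q : ℕ} {l : List α} {c : List α} (hc : c ∈ chunk q l) : c ≠ [] :=
  (mem_chunk_aux q l.length l le_rfl c hc).1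

lemma mem_chunk_length {q : ℕ} (hq : 1 ≤ q) {l : List α} {c : List α} (hc : c ∈ chunk q l) :
    c.length ≤ q :=
  (mem_chunk_aux q l.length l le_rfl c hc).2 hq

lemma chunk_length_le {q : ℕ} (hq : 1 ≤ q) {m : ℕ} : ∀ {l : List α}, l.length ≤ m * q →
    (chunk q l).length ≤ m := by
  induction m with
  | zero =>
    intro l hl
    simp only [Nat.zero_mul] at hl
    have : l = [] := List.length_eq_zero_iff.1 (Nat.le_zero.1 hl)
    subst this; simp
  | succ m ih =>
    intro l hl
    match l with
    | [] => simp
    | x :: xs =>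
      rw [chunk_cons]
      simp only [List.length_cons]
      have hq1 : (m+1) * q = m * q + q := by ring
      have : (xs.drop (q-1)).length ≤ m * q := by
        simp at hl ⊢; omega
      have := ih this
      omega

lemma mem_foldr_sup [DecidableEq β] {L : List (Finset β)} {x : β} :
    x ∈ L.foldr (· ∪ ·) ∅ ↔ ∃ t ∈ L, x ∈ t := by
  induction L with
  | nil => simp
  | cons a L ih => simp [ih]

lemma card_foldr_sup_le [DecidableEq β] (L : List (Finset β)) :
    (L.foldr (· ∪ ·) ∅).card ≤ (L.map Finset.card).sum := by
  induction L with
  | nil => simp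
  | cons a L ih =>
    simp only [List.foldr_cons, List.map_cons, List.sum_cons]
    exact le_trans (Finset.card_union_le _ _) (by omega)



/-- points inside the box restricted to first `k` coordinates -/
def inBox {d : ℕ} (a b : Fin d → ℝ) (k : ℕ) (x : Fin d → ℝ) : Prop :=
  ∀ i : Fin d, (i : ℕ) < k → a i ≤ x i ∧ x i ≤ b i

/-- the inductive statement -/
def Q (d k : ℕ) : Prop :=
  ∃ C : ℝ, 0 < C ∧ ∀ (S : Finset (Fin d → ℝ)) (r : ℕ), 1 ≤ r →
    ∃ Pi : Finset (Finset (Fin d → ℝ)),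
      (∀ P ∈ Pi, P.Nonempty) ∧
      (∀ P ∈ Pi, ∀ Q ∈ Pi, P ≠ Q → Disjoint P Q) ∧
      (Pi.sup id = S) ∧
      Pi.card ≤ r ∧
      (∀ P ∈ Pi, P.card ≤ ⌈(S.card : ℝ) / r⌉₊) ∧
      (∀ a b : Fin d → ℝ,
        ((S.filter (fun x => inBox a b k x ∧
            ∃ P ∈ Pi, x ∈ P ∧ ¬ (∀ y ∈ P, inBox a b k y))).card : ℝ)
          ≤ C * S.card / (r : ℝ) ^ (1 / (k : ℝ)))

lemma inBox_succ {d k : ℕ} (hk : k < d) (a b : Fin d → ℝ) (x : Fin d → ℝ) :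
    inBox a b (k+1) x ↔ inBox a b k x ∧
      (a ⟨k, hk⟩ ≤ x ⟨k, hk⟩ ∧ x ⟨k, hk⟩ ≤ b ⟨k, hk⟩) := by
  constructor
  · intro h
    exact ⟨fun i hi => h i (by omega), h ⟨k, hk⟩ (by simp)⟩
  · rintro ⟨h1, h2⟩ i hi
    rcases Nat.lt_succ_iff_lt_or_eq.1 hi with h | h
    · exact h1 i h
    · have : i = ⟨k, hk⟩ := Fin.ext h
      subst this; exact h2

lemma inBox_one {d : ℕ} (hd : 0 < d) (a b : Fin d → ℝ) (x : Fin d → ℝ) :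
    inBox a b 1 x ↔ (a ⟨0, hd⟩ ≤ x ⟨0, hd⟩ ∧ x ⟨0, hd⟩ ≤ b ⟨0, hd⟩) := by
  have h0 : inBox a b 0 x := fun i hi => by omega
  rw [show (1:ℕ) = 0 + 1 from rfl, inBox_succ hd]
  simp [h0]

/-- trivial partition into singletons, no bad points ever -/
lemma singletons (d : ℕ) (S : Finset (Fin d → ℝ)) (r : ℕ) (hr : 1 ≤ r) (hcard : S.card ≤ r) :
    ∃ Pi : Finset (Finset (Fin d → ℝ)),
      (∀ P ∈ Pi, P.Nonempty) ∧
      (∀ P ∈ Pi, ∀ Q ∈ Pi, P ≠ Q → Disjoint P Q) ∧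
      (Pi.sup id = S) ∧
      Pi.card ≤ r ∧
      (∀ P ∈ Pi, P.card ≤ ⌈(S.card : ℝ) / r⌉₊) ∧
      (∀ (k : ℕ) (a b : Fin d → ℝ),
        (S.filter (fun x => inBox a b k x ∧
            ∃ P ∈ Pi, x ∈ P ∧ ¬ (∀ y ∈ P, inBox a b k y))).card = 0) := by
  refine ⟨S.image (fun x => {x}), ?_, ?_, ?_, ?_, ?_, ?_⟩
  · intro P hP
    obtain ⟨x, -, rfl⟩ := Finset.mem_image.1 hP
    exact ⟨x, Finset.mem_singleton_self x⟩
  · intro P hP Q' hQ hne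
    obtain ⟨x, -, rfl⟩ := Finset.mem_image.1 hP
    obtain ⟨y, -, rfl⟩ := Finset.mem_image.1 hQ
    simp only [Finset.disjoint_singleton_right, Finset.mem_singleton]
    intro h; exact hne (by rw [h])
  · rw [Finset.sup_image]
    exact Finset.sup_singleton_eq_self S
  · exact le_trans (Finset.card_image_le) hcard
  · intro P hP
    obtain ⟨x, -, rfl⟩ := Finset.mem_image.1 hP
    simp only [Finset.card_singleton]
    rcases Nat.eq_zero_or_pos S.card with h | h
    · -- impossible: P nonempty means S nonempty
      exfalso
      obtain ⟨x, hx, -⟩ := Finset.mem_image.1 hP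
      exact Finset.card_ne_zero_of_mem hx h
    · have : (0:ℝ) < (S.card : ℝ) / r := by positivity
      exact Nat.one_le_iff_ne_zero.2 (by
        intro hc
        rw [Nat.ceil_eq_zero] at hc
        linarith)
  · intro k a b
    rw [Finset.card_eq_zero, Finset.filter_eq_empty_iff]
    rintro x hx ⟨hxin, P, hP, hxP, hbad⟩
    obtain ⟨y, -, rfl⟩ := Finset.mem_image.1 hP
    have : x = y := Finset.mem_singleton.1 hxP
    subst this
    exact hbad (fun z hz => by rw [Finset.mem_singleton.1 hz]; exact hxin)

/-- splitting a filtered count over the pieces of a flatten -/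
lemma filter_card_split [DecidableEq α] (FL : List (List α)) (hnd : FL.flatten.Nodup)
    (p : α → Prop) :
    (FL.flatten.toFinset.filter p).card
      = ∑ j : Fin FL.length, ((FL.get j).toFinset.filter p).card := by
  have hdisj : ∀ i j : Fin FL.length, i ≠ j →
      Disjoint ((FL.get i).toFinset) ((FL.get j).toFinset) := by
    have hpw : List.Pairwise List.Disjoint FL := (List.nodup_flatten.1 hnd).2
    rw [List.pairwise_iff_get] at hpw
    intro i j hij
    rcases lt_or_gt_of_ne hij with h | h
    · rw [Finset.disjoint_left]
      intro x hx hx'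
      exact hpw i j h (List.mem_toFinset.1 hx) (List.mem_toFinset.1 hx')
    · rw [Finset.disjoint_right]
      intro x hx hx'
      exact hpw j i h (List.mem_toFinset.1 hx) (List.mem_toFinset.1 hx')
  have hS : FL.flatten.toFinset = Finset.univ.biUnion (fun j : Fin FL.length => (FL.get j).toFinset) := by
    ext x
    simp only [List.mem_toFinset, List.mem_flatten, Finset.mem_biUnion, Finset.mem_univ,
      true_and]
    constructor
    · rintro ⟨l, hl, hx⟩
      obtain ⟨j, rfl⟩ := List.mem_iff_get.1 hl
      exact ⟨j, hx⟩
    · rintro ⟨j, hj⟩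
      exact ⟨FL.get j, List.get_mem FL j, hj⟩
  rw [hS, Finset.filter_biUnion]
  rw [Finset.card_biUnion]
  intro i _ j _ hij
  exact Finset.disjoint_filter_filter (hdisj i j hij)

/-- at most two pieces are "cut" by an interval -/
lemma cut_card_le_two (FL : List (List α)) (κ : α → ℝ)
    (hpw : FL.Pairwise (fun s t => ∀ x ∈ s, ∀ y ∈ t, κ x ≤ κ y)) (aa bb : ℝ) :
    ((Finset.univ : Finset (Fin FL.length)).filter (fun j =>
      (∃ x ∈ FL.get j, aa ≤ κ x ∧ κ x ≤ bb) ∧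
      (∃ y ∈ FL.get j, ¬ (aa ≤ κ y ∧ κ y ≤ bb)))).card ≤ 2 := by
  rw [List.pairwise_iff_get] at hpw
  set J := ((Finset.univ : Finset (Fin FL.length)).filter (fun j =>
      (∃ x ∈ FL.get j, aa ≤ κ x ∧ κ x ≤ bb) ∧
      (∃ y ∈ FL.get j, ¬ (aa ≤ κ y ∧ κ y ≤ bb)))) with hJ
  have h3 : ∀ i j k : Fin FL.length, i ∈ J → j ∈ J → k ∈ J → i < j → j < k → False := by
    intro i j k hi hj hk hij hjk
    obtain ⟨⟨x, hx, hxin⟩, ⟨y, hy, hyout⟩⟩ := (Finset.mem_filter.1 hj).2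
    rcases not_and_or.1 hyout with h | h
    · -- κ y < aa ; slab i entirely below aa, contradicting its inside point
      push_neg at h
      obtain ⟨⟨x', hx', hx'in⟩, -⟩ := (Finset.mem_filter.1 hi).2
      have := hpw i j hij x' hx' y hy
      linarith [hx'in.1]
    · push_neg at h
      obtain ⟨⟨x', hx', hx'in⟩, -⟩ := (Finset.mem_filter.1 hk).2
      have := hpw j k hjk y hy x' hx'
      linarith [hx'in.2]
  by_contra hcon
  push_neg at hcon
  obtain ⟨u, hu, v, hv, w, hw, huv, huw, hvw⟩ := Finset.two_lt_card.1 hcon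
  rcases lt_trichotomy u v with h1 | h1 | h1
  · rcases lt_trichotomy v w with h2 | h2 | h2
    · exact h3 u v w hu hv hw h1 h2
    · exact hvw (by exact_mod_cast h2)
    · rcases lt_trichotomy u w with h4 | h4 | h4
      · exact h3 u w v hu hw hv h4 h2
      · exact huw (by exact_mod_cast h4)
      · exact h3 w u v hw hu hv h4 h1
  · exact huv (by exact_mod_cast h1)
  · rcases lt_trichotomy u w with h2 | h2 | h2
    · exact h3 v u w hv hu hw h1 h2
    · exact huw (by exact_mod_cast h2)
    · rcases lt_trichotomy v w with h4 | h4 | h4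
      · exact h3 v w u hv hw hu h4 h2
      · exact hvw (by exact_mod_cast h4)
      · exact h3 w v u hw hv hu h4 h1

lemma filter_inst_irrel {p : α → Prop} {h1 h2 : DecidablePred p} {s : Finset α} :
    @Finset.filter _ p h1 s = @Finset.filter _ p h2 s := by
  congr 1

-- sorted blocks construction
lemma flatten_nodup_get_disjoint {FL : List (List α)} (hnd : FL.flatten.Nodup)
    {i j : Fin FL.length} (hij : i ≠ j) : ∀ x ∈ FL.get i, x ∉ FL.get j := by
  have hpw : List.Pairwise List.Disjoint FL := (List.nodup_flatten.1 hnd).2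
  rw [List.pairwise_iff_get] at hpw
  intro x hx hx'
  rcases lt_or_gt_of_ne hij with h | h
  · exact hpw i j h hx hx'
  · exact hpw j i h hx' hx

lemma sorted_blocks {d : ℕ} (ι : Fin d) (S : Finset (Fin d → ℝ)) (q : ℕ) (hq : 1 ≤ q) :
    ∃ blocks : List (List (Fin d → ℝ)),
      blocks.flatten.Nodup ∧ blocks.flatten.toFinset = S ∧
      blocks.flatten.length = S.card ∧
      (∀ c ∈ blocks, c ≠ [] ∧ c.length ≤ q) ∧
      (∀ m : ℕ, S.card ≤ m * q → blocks.length ≤ m) ∧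
      blocks.flatten.Pairwise (fun x y => x ι ≤ y ι) := by
  set r0 : (Fin d → ℝ) → (Fin d → ℝ) → Prop := fun x y => x ι ≤ y ι with hr0
  letI : IsTotal (Fin d → ℝ) r0 := ⟨fun a b => le_total (a ι) (b ι)⟩
  letI : IsTrans (Fin d → ℝ) r0 := ⟨fun a b c hab hbc => le_trans hab hbc⟩
  set l : List (Fin d → ℝ) := List.insertionSort r0 S.toList with hl
  have hperm : l.Perm S.toList := List.perm_insertionSort r0 S.toList
  have hnd : l.Nodup := hperm.nodup_iff.2 S.nodup_toList
  have hfin : l.toFinset = S := by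
    rw [List.toFinset_eq_of_perm _ _ hperm, Finset.toList_toFinset]
  have hlen : l.length = S.card := by
    rw [hperm.length_eq, Finset.length_toList]
  have hsorted : List.Pairwise r0 l := List.pairwise_insertionSort r0 S.toList
  refine ⟨chunk q l, ?_, ?_, ?_, ?_, ?_, ?_⟩
  · rw [chunk_flatten]; exact hnd
  · rw [chunk_flatten]; exact hfin
  · rw [chunk_flatten]; exact hlen
  · intro c hc
    exact ⟨mem_chunk_ne_nil hc, mem_chunk_length hq hc⟩
  · intro m hm
    exact chunk_length_le hq (by rw [hlen]; exact hm)
  · rw [chunk_flatten]; exact hsorted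

lemma nonneg_rhs {C n r : ℝ} (hC : 0 ≤ C) (hn : 0 ≤ n) (e : ℝ) (hr : 0 ≤ r) :
    0 ≤ C * n / r ^ e := by positivity

lemma base {d : ℕ} (hd : 0 < d) : Q d 1 := by
  refine ⟨4, by norm_num, ?_⟩
  intro S r hr
  by_cases hsr : S.card ≤ r
  · obtain ⟨Pi, h1, h2, h3, h4, h5, h6⟩ := singletons d S r hr hsr
    refine ⟨Pi, h1, h2, h3, h4, h5, fun a b => ?_⟩
    rw [h6 1 a b]
    push_cast
    positivity
  · push_neg at hsr
    have hrpos : (0:ℝ) < r := by exact_mod_cast lt_of_lt_of_le Nat.zero_lt_one hr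
    have hn1 : 1 ≤ S.card := le_trans hr (le_of_lt hsr)
    have hq1 : 1 ≤ ⌈(S.card:ℝ)/r⌉₊ := Nat.ceil_pos.2 (by positivity)
    set n := S.card with hn
    set q := ⌈(n:ℝ)/r⌉₊ with hq
    have hnrq : n ≤ r * q := by
      have h1 : (n:ℝ)/r ≤ q := Nat.le_ceil _
      rw [div_le_iff₀ hrpos] at h1
      exact_mod_cast (by linarith : (n:ℝ) ≤ r * q)
    have hq2 : (q:ℝ) ≤ 2 * n / r := by
      have h1 : (q:ℝ) < n/r + 1 := Nat.ceil_lt_add_one (by positivity)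
      have h2 : (1:ℝ) ≤ (n:ℝ)/r := by
        rw [le_div_iff₀ hrpos]; rw [one_mul]; exact_mod_cast le_of_lt hsr
      have : 2 * (n:ℝ) / r = n/r + n/r := by ring
      linarith
    obtain ⟨blocks, hbnd, hbfin, hblen, hbsz, hbcount, hbflpw⟩ :=
      sorted_blocks (⟨0, hd⟩ : Fin d) S q hq1
    have hbpw : blocks.Pairwise (fun s t => ∀ x ∈ s, ∀ y ∈ t, x ⟨0, hd⟩ ≤ y ⟨0, hd⟩) :=
      (List.pairwise_flatten.1 hbflpw).2
    have hNr : blocks.length ≤ r := hbcount r hnrq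
    set Pi := (blocks.map List.toFinset).toFinset with hPi
    have hmem : ∀ P, P ∈ Pi ↔ ∃ c ∈ blocks, c.toFinset = P := by
      intro P; simp [hPi]
    have hsup : Pi.sup id = S := by
      ext x
      rw [Finset.mem_sup]
      constructor
      · rintro ⟨P, hP, hx⟩
        obtain ⟨c, hc, rfl⟩ := (hmem P).1 hP
        rw [← hbfin]
        exact List.mem_toFinset.2 (List.mem_flatten.2 ⟨c, hc, List.mem_toFinset.1 hx⟩)
      · intro hx
        rw [← hbfin] at hx
        obtain ⟨c, hc, hxc⟩ := List.mem_flatten.1 (List.mem_toFinset.1 hx)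
        exact ⟨c.toFinset, (hmem _).2 ⟨c, hc, rfl⟩, List.mem_toFinset.2 hxc⟩
    refine ⟨Pi, ?_, ?_, hsup, ?_, ?_, ?_⟩
    · intro P hP
      obtain ⟨c, hc, rfl⟩ := (hmem P).1 hP
      obtain ⟨x, hx⟩ := List.exists_mem_of_ne_nil c (hbsz c hc).1
      exact ⟨x, List.mem_toFinset.2 hx⟩
    · intro P hP Q' hQ' hne
      obtain ⟨c, hc, rfl⟩ := (hmem P).1 hP
      obtain ⟨c', hc', rfl⟩ := (hmem Q').1 hQ'
      have hcc : c ≠ c' := fun h => hne (by rw [h])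
      have hdisj := (List.nodup_flatten.1 hbnd).2
      have hd2 := (haveI : Std.Symm (α := List (Fin d → ℝ)) List.Disjoint := ⟨fun _ _ h => List.Disjoint.symm h⟩; List.Pairwise.forall hdisj) hc hc' hcc
      rw [Finset.disjoint_left]; intro x hx hx'
      exact hd2 (List.mem_toFinset.1 hx) (List.mem_toFinset.1 hx')
    · calc Pi.card ≤ (blocks.map List.toFinset).length := List.toFinset_card_le _
        _ = blocks.length := List.length_map _
        _ ≤ r := hNr
    · intro P hP
      obtain ⟨c, hc, rfl⟩ := (hmem P).1 hP
      calc c.toFinset.card ≤ c.length := List.toFinset_card_le c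
        _ ≤ q := (hbsz c hc).2
    · intro a b
      set p : (Fin d → ℝ) → Prop := fun x => inBox a b 1 x ∧
        ∃ P ∈ Pi, x ∈ P ∧ ¬ (∀ y ∈ P, inBox a b 1 y) with hp
      rw [filter_inst_irrel (h2 := fun x => Classical.propDecidable (p x))]
      have hsplit := filter_card_split blocks hbnd p
      rw [hbfin] at hsplit
      set J := ((Finset.univ : Finset (Fin blocks.length)).filter (fun j =>
        (∃ x ∈ blocks.get j, a ⟨0, hd⟩ ≤ x ⟨0, hd⟩ ∧ x ⟨0, hd⟩ ≤ b ⟨0, hd⟩) ∧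
        (∃ y ∈ blocks.get j, ¬ (a ⟨0, hd⟩ ≤ y ⟨0, hd⟩ ∧ y ⟨0, hd⟩ ≤ b ⟨0, hd⟩)))) with hJdef
    
      have hJ2 : J.card ≤ 2 := cut_card_le_two blocks (fun x => x ⟨0, hd⟩) hbpw _ _
      have hzero : ∀ j ∉ J, (@Finset.filter _ p (fun x => Classical.propDecidable (p x)) (blocks.get j).toFinset).card = 0 := by
        intro j hj
        rw [Finset.card_eq_zero]
        apply Finset.eq_empty_iff_forall_notMem.2
        intro x hxmem
        obtain ⟨hx, hxin, P, hP, hxP, hbad⟩ :=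
          (@Finset.mem_filter _ p (fun x => Classical.propDecidable (p x)) _ _).1 hxmem
        obtain ⟨c, hc, rfl⟩ := (hmem P).1 hP
        obtain ⟨i, hieq⟩ := List.mem_iff_get.1 hc
        have hxi : x ∈ blocks.get i := by rw [hieq]; exact List.mem_toFinset.1 hxP
        have hij : i = j := by
          by_contra hne
          exact flatten_nodup_get_disjoint hbnd hne x hxi (List.mem_toFinset.1 hx)
        subst hij
        push_neg at hbad
        obtain ⟨y, hyP, hy⟩ := hbad
        have hyi : y ∈ blocks.get i := by rw [hieq]; exact List.mem_toFinset.1 hyP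
        apply hj
        refine Finset.mem_filter.2 ⟨Finset.mem_univ _, ⟨x, hxi, (inBox_one hd a b x).1 hxin⟩,
          ⟨y, hyi, fun hcon => hy ((inBox_one hd a b y).2 hcon)⟩⟩
      have hbound : ∀ j : Fin blocks.length, (@Finset.filter _ p (fun x => Classical.propDecidable (p x)) (blocks.get j).toFinset).card ≤ q := by
        intro j
        exact le_trans (@Finset.card_filter_le _ _ p (fun x => Classical.propDecidable (p x)))
          (le_trans (List.toFinset_card_le _) ((hbsz _ (List.get_mem _ _)).2))
      have hsum : (@Finset.filter _ p (fun x => Classical.propDecidable (p x)) S).card ≤ 2 * q := by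
        refine le_trans (le_of_eq hsplit) ?_
        calc ∑ j, (@Finset.filter _ p (fun x => Classical.propDecidable (p x)) (blocks.get j).toFinset).card
            = ∑ j ∈ J, (@Finset.filter _ p (fun x => Classical.propDecidable (p x)) (blocks.get j).toFinset).card :=
              (Finset.sum_subset (Finset.subset_univ J) (fun j _ hj => hzero j hj)).symm
          _ ≤ ∑ _j ∈ J, q := Finset.sum_le_sum (fun j _ => hbound j)
          _ = J.card * q := by rw [Finset.sum_const, smul_eq_mul]
          _ ≤ 2 * q := Nat.mul_le_mul_right q hJ2
      have hcast : ((@Finset.filter _ p (fun x => Classical.propDecidable (p x)) S).card : ℝ) ≤ 2 * q := by exact_mod_cast hsum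
      have hrw : ((1:ℕ):ℝ) = 1 := Nat.cast_one
      calc ((@Finset.filter _ p (fun x => Classical.propDecidable (p x)) S).card : ℝ) ≤ 2 * q := hcast
        _ ≤ 2 * (2 * n / r) := by linarith
        _ = 4 * n / r := by ring
        _ = 4 * n / (r:ℝ) ^ (1 / ((1:ℕ):ℝ)) := by
            rw [hrw]; norm_num

lemma flatten_map_flatten (L : List (List (List α))) :
    (L.map List.flatten).flatten = L.flatten.flatten := by
  induction L with
  | nil => simp
  | cons s t ih => simp [ih]

lemma filter_card_eq_of_iff {s : Finset α} {p q : α → Prop} {h1 : DecidablePred p}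
    {h2 : DecidablePred q} (h : ∀ x ∈ s, (p x ↔ q x)) :
    @Finset.filter _ p h1 s = @Finset.filter _ q h2 s := by
  ext x
  simp only [Finset.mem_filter]
  constructor
  · rintro ⟨hx, hp⟩; exact ⟨hx, (h x hx).1 hp⟩
  · rintro ⟨hx, hp⟩; exact ⟨hx, (h x hx).2 hp⟩

set_option maxHeartbeats 1000000 in
lemma step {d k : ℕ} (hk1 : 1 ≤ k) (hkd : k < d) (ih : Q d k) : Q d (k+1) := by
  classical
  obtain ⟨Ck, hCk, hQk⟩ := ih
  choose f hf1 hf2 hf3 hf4 hf5 hf6 using hQk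
  refine ⟨8 + 8 * Ck, by positivity, ?_⟩
  intro S r hr
  by_cases hsr : S.card ≤ r
  · obtain ⟨Pi, h1, h2, h3, h4, h5, h6⟩ := singletons d S r hr hsr
    refine ⟨Pi, h1, h2, h3, h4, h5, fun a b => ?_⟩
    rw [h6 (k+1) a b]
    push_cast
    positivity
  · push_neg at hsr
    have hrpos : (0:ℝ) < r := by exact_mod_cast lt_of_lt_of_le Nat.zero_lt_one hr
    have hn1 : 1 ≤ S.card := le_trans hr (le_of_lt hsr)
    have hq1 : 1 ≤ ⌈(S.card:ℝ)/r⌉₊ := Nat.ceil_pos.2 (by positivity)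
    set n := S.card with hn
    set q := ⌈(n:ℝ)/r⌉₊ with hq
    have hnpos : (0:ℝ) < n := by exact_mod_cast hn1
    have hnrq : n ≤ r * q := by
      have h1 : (n:ℝ)/r ≤ q := Nat.le_ceil _
      rw [div_le_iff₀ hrpos] at h1
      exact_mod_cast (by linarith : (n:ℝ) ≤ r * q)
    have hq2 : (q:ℝ) ≤ 2 * n / r := by
      have h1 : (q:ℝ) < n/r + 1 := Nat.ceil_lt_add_one (by positivity)
      have h2 : (1:ℝ) ≤ (n:ℝ)/r := by
        rw [le_div_iff₀ hrpos]; rw [one_mul]; exact_mod_cast le_of_lt hsr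
      have : 2 * (n:ℝ) / r = n/r + n/r := by ring
      linarith
    have hqpos : (0:ℝ) < q := by exact_mod_cast hq1
    -- sorted blocks along coordinate k
    obtain ⟨blocks, hbnd, hbfin, hblen, hbsz, hbcount, hbflpw⟩ :=
      sorted_blocks (⟨k, hkd⟩ : Fin d) S q hq1
    set N := blocks.length with hN
    have hNr : N ≤ r := hbcount r hnrq
    have hN1 : 1 ≤ N := by
      have h1 : blocks.flatten ≠ [] := by
        intro hcon; rw [hcon] at hblen; simp at hblen; omega
      have h2 : blocks ≠ [] := by intro hcon; rw [hcon] at h1; simp at h1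
      have h3 := List.length_pos_iff.2 h2
      omega
    -- real exponents
    set K := (k:ℝ) with hK
    have hK1 : (1:ℝ) ≤ K := by rw [hK]; exact_mod_cast hk1
    set θ := 1/(K+1) with hθ
    have hθpos : 0 < θ := by rw [hθ]; exact div_pos one_pos (by linarith)
    have hθ1 : θ ≤ 1 := by
      rw [hθ]
      rw [div_le_one (by linarith)]
      linarith
    set ρ := (r:ℝ)^θ with hρ
    have hρpos : 0 < ρ := Real.rpow_pos_of_pos hrpos θ
    have hr1 : (1:ℝ) ≤ r := by exact_mod_cast hr
    have hρ1 : 1 ≤ ρ := by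
      rw [hρ, show (1:ℝ) = (r:ℝ)^(0:ℝ) by rw [Real.rpow_zero]]
      exact Real.rpow_le_rpow_of_exponent_le hr1 (le_of_lt hθpos)
    have hρr : ρ ≤ r := by
      rw [hρ]
      nth_rewrite 2 [show (r:ℝ) = (r:ℝ)^(1:ℝ) by rw [Real.rpow_one]]
      exact Real.rpow_le_rpow_of_exponent_le hr1 hθ1
    set M := ⌈ρ⌉₊ with hM
    have hM1 : 1 ≤ M := Nat.ceil_pos.2 hρpos
    have hMρ : ρ ≤ M := Nat.le_ceil ρ
    have hM2ρ : (M:ℝ) ≤ 2*ρ := by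
      have := Nat.ceil_lt_add_one (le_of_lt hρpos)
      rw [← hM] at this
      linarith
    set g := N / M + 1 with hg
    have hg1 : 1 ≤ g := by rw [hg]; exact Nat.le_add_left 1 (N / M)
    have hNMg : N ≤ M * g := by
      have h1 := Nat.div_add_mod N M
      have h2 : N % M < M := Nat.mod_lt N (by omega)
      have h3 : M * g = M * (N / M) + M := Nat.mul_succ M (N / M)
      omega
    have hgρ : (g:ℝ) ≤ 2*r/ρ := by
      have h1 : ((N / M : ℕ):ℝ) ≤ (N:ℝ)/M := Nat.cast_div_le
      have h2 : (N:ℝ)/M ≤ r/ρ := by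
        apply div_le_div₀ (le_of_lt hrpos) (by exact_mod_cast hNr) hρpos hMρ
      have h3 : (1:ℝ) ≤ r/ρ := by
        rw [le_div_iff₀ hρpos, one_mul]; exact hρr
      have h4 : (g:ℝ) = ((N / M : ℕ):ℝ) + 1 := by rw [hg]; push_cast; ring
      have h5 : 2*(r:ℝ)/ρ = r/ρ + r/ρ := by ring
      linarith
    -- slabs
    set slabs := chunk g blocks with hslabs
    have hsfl : slabs.flatten = blocks := chunk_flatten g blocks
    have hscount : slabs.length ≤ M := chunk_length_le hg1 (by omega)
    have hssz : ∀ s ∈ slabs, s ≠ [] ∧ s.length ≤ g := fun s hs =>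
      ⟨mem_chunk_ne_nil hs, mem_chunk_length hg1 hs⟩
    set FL := slabs.map List.flatten with hFL
    have hFLfl : FL.flatten = blocks.flatten := by
      rw [hFL, flatten_map_flatten, hsfl]
    have hFLnd : FL.flatten.Nodup := by rw [hFLfl]; exact hbnd
    have hFLfin : FL.flatten.toFinset = S := by rw [hFLfl]; exact hbfin
    have hFLpw : FL.Pairwise (fun s t => ∀ x ∈ s, ∀ y ∈ t,
        x (⟨k, hkd⟩ : Fin d) ≤ y (⟨k, hkd⟩ : Fin d)) := by
      have : FL.flatten.Pairwise (fun x y => x (⟨k, hkd⟩ : Fin d) ≤ y (⟨k, hkd⟩ : Fin d)) := by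
        rw [hFLfl]; exact hbflpw
      exact (List.pairwise_flatten.1 this).2
    have hFLlen : FL.length = slabs.length := List.length_map _
    -- nodup of each slab-flatten, and length bounds
    have hmemFL : ∀ u ∈ FL, u.Nodup := fun u hu => (List.nodup_flatten.1 hFLnd).1 u hu
    have hslablen : ∀ s ∈ slabs, s.flatten.length ≤ s.length * q := by
      intro s hs
      rw [List.length_flatten]
      have : ∀ x ∈ s.map List.length, x ≤ q := by
        intro x hx
        obtain ⟨c, hc, rfl⟩ := List.mem_map.1 hx
        have hcb : c ∈ blocks := by
          rw [← hsfl]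
          exact List.mem_flatten.2 ⟨s, hs, hc⟩
        exact (hbsz c hcb).2
      have h := List.sum_le_card_nsmul (s.map List.length) q this
      rw [List.length_map] at h
      simpa [smul_eq_mul] using h
    -- the partition function on slabs
    set F : List (List (Fin d → ℝ)) → Finset (Finset (Fin d → ℝ)) := fun s =>
      if h : 1 ≤ s.length then f s.flatten.toFinset s.length h else ∅ with hFdef
    have hFeq : ∀ s ∈ slabs, ∀ (h : 1 ≤ s.length), F s = f s.flatten.toFinset s.length h := by
      intro s hs h
      rw [hFdef]
      simp [h]
    set Pi := (slabs.map F).foldr (· ∪ ·) ∅ with hPidef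
    have hslen : ∀ s ∈ slabs, 1 ≤ s.length := by
      intro s hs
      have := (hssz s hs).1
      cases s with
      | nil => simp at this
      | cons a t => simp
    have hPimem : ∀ P, P ∈ Pi ↔ ∃ s ∈ slabs, P ∈ F s := by
      intro P
      rw [hPidef, mem_foldr_sup]
      constructor
      · rintro ⟨t, ht, hPt⟩
        obtain ⟨s, hs, rfl⟩ := List.mem_map.1 ht
        exact ⟨s, hs, hPt⟩
      · rintro ⟨s, hs, hPs⟩
        exact ⟨F s, List.mem_map.2 ⟨s, hs, rfl⟩, hPs⟩
    have hsubT : ∀ s ∈ slabs, ∀ P ∈ F s, P ⊆ s.flatten.toFinset := by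
      intro s hs P hP
      rw [hFeq s hs (hslen s hs)] at hP
      have := Finset.le_sup (f := id) hP
      rw [hf3 s.flatten.toFinset s.length (hslen s hs)] at this
      exact this
    -- disjointness of distinct slab supports
    have hTdisj : ∀ s ∈ slabs, ∀ s' ∈ slabs, s.flatten.toFinset ≠ s'.flatten.toFinset →
        Disjoint s.flatten.toFinset s'.flatten.toFinset := by
      intro s hs s' hs' hne
      have hpwd : List.Pairwise List.Disjoint FL := (List.nodup_flatten.1 hFLnd).2
      have hmem1 : s.flatten ∈ FL := List.mem_map.2 ⟨s, hs, rfl⟩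
      have hmem2 : s'.flatten ∈ FL := List.mem_map.2 ⟨s', hs', rfl⟩
      have hnefl : s.flatten ≠ s'.flatten := by
        intro h; exact hne (by rw [h])
      have := (haveI : Std.Symm (α := List (Fin d → ℝ)) List.Disjoint := ⟨fun _ _ h => List.Disjoint.symm h⟩; List.Pairwise.forall hpwd) hmem1 hmem2 hnefl
      rw [Finset.disjoint_left]
      intro x hx hx'
      exact this (List.mem_toFinset.1 hx) (List.mem_toFinset.1 hx')
    refine ⟨Pi, ?_, ?_, ?_, ?_, ?_, ?_⟩
    · -- nonempty
      intro P hP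
      obtain ⟨s, hs, hPs⟩ := (hPimem P).1 hP
      rw [hFeq s hs (hslen s hs)] at hPs
      exact hf1 _ _ _ P hPs
    · -- pairwise disjoint
      intro P hP Q' hQ' hne
      obtain ⟨s, hs, hPs⟩ := (hPimem P).1 hP
      obtain ⟨s', hs', hQs⟩ := (hPimem Q').1 hQ'
      obtain ⟨i0, hi0⟩ := List.mem_iff_get.1 hs
      obtain ⟨j0, hj0⟩ := List.mem_iff_get.1 hs'
      by_cases hij : (i0:ℕ) = (j0:ℕ)
      · have hss : s = s' := by rw [← hi0, ← hj0]; congr 1; exact Fin.ext hij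
        subst hss
        rw [hFeq s hs (hslen s hs)] at hPs hQs
        exact hf2 _ _ _ P hPs Q' hQs hne
      · have hi1 : (i0 : ℕ) < FL.length := by rw [hFLlen]; exact i0.2
        have hj1 : (j0 : ℕ) < FL.length := by rw [hFLlen]; exact j0.2
        have hgeti : FL.get ⟨i0, hi1⟩ = s.flatten := by
          simp only [hFL, List.get_eq_getElem, List.getElem_map]
          rw [show slabs[(i0:ℕ)] = s from by rw [← hi0]; simp [List.get_eq_getElem]]
        have hgetj : FL.get ⟨j0, hj1⟩ = s'.flatten := by
          simp only [hFL, List.get_eq_getElem, List.getElem_map]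
          rw [show slabs[(j0:ℕ)] = s' from by rw [← hj0]; simp [List.get_eq_getElem]]
        have hne2 : (⟨i0, hi1⟩ : Fin FL.length) ≠ ⟨j0, hj1⟩ := by
          intro hcon
          exact hij (by simpa using congrArg Fin.val hcon)
        have hdisj := flatten_nodup_get_disjoint hFLnd hne2
        rw [hgeti, hgetj] at hdisj
        have h1 := hsubT s hs P hPs
        have h2 := hsubT s' hs' Q' hQs
        rw [Finset.disjoint_left]
        intro x hx hx'
        exact hdisj x (List.mem_toFinset.1 (h1 hx)) (List.mem_toFinset.1 (h2 hx'))
    · -- sup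
      ext x
      rw [Finset.mem_sup]
      constructor
      · rintro ⟨P, hP, hx⟩
        obtain ⟨s, hs, hPs⟩ := (hPimem P).1 hP
        have := hsubT s hs P hPs hx
        rw [← hFLfin]
        have hmem1 : s.flatten ∈ FL := List.mem_map.2 ⟨s, hs, rfl⟩
        exact List.mem_toFinset.2 (List.mem_flatten.2 ⟨s.flatten, hmem1, List.mem_toFinset.1 this⟩)
      · intro hx
        rw [← hFLfin] at hx
        obtain ⟨u, hu, hxu⟩ := List.mem_flatten.1 (List.mem_toFinset.1 hx)
        obtain ⟨s, hs, rfl⟩ := List.mem_map.1 hu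
        -- x ∈ s.flatten.toFinset = sup of F s
        have hxT : x ∈ s.flatten.toFinset := List.mem_toFinset.2 hxu
        rw [← hf3 s.flatten.toFinset s.length (hslen s hs)] at hxT
        rw [Finset.mem_sup] at hxT
        obtain ⟨P, hP, hxP⟩ := hxT
        refine ⟨P, (hPimem P).2 ⟨s, hs, ?_⟩, hxP⟩
        rw [hFeq s hs (hslen s hs)]
        exact hP
    · -- card
      have h1 : Pi.card ≤ ((slabs.map F).map Finset.card).sum := card_foldr_sup_le _
      have h2 : ((slabs.map F).map Finset.card).sum ≤ (slabs.map List.length).sum := by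
        rw [List.map_map]
        apply List.sum_le_sum
        intro s hs
        simp only [Function.comp_apply]
        rw [hFeq s hs (hslen s hs)]
        exact hf4 _ _ _
      have h3 : (slabs.map List.length).sum = N := by
        rw [← List.length_flatten, hsfl]
      omega
    · -- sizes
      intro P hP
      obtain ⟨s, hs, hPs⟩ := (hPimem P).1 hP
      rw [hFeq s hs (hslen s hs)] at hPs
      have h1 := hf5 s.flatten.toFinset s.length (hslen s hs) P hPs
      have hnodup : s.flatten.Nodup := hmemFL s.flatten (List.mem_map.2 ⟨s, hs, rfl⟩)
      have hcard : s.flatten.toFinset.card = s.flatten.length := List.toFinset_card_of_nodup hnodup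
      have h2 : ⌈(s.flatten.toFinset.card:ℝ)/s.length⌉₊ ≤ q := by
        rw [Nat.ceil_le]
        rw [div_le_iff₀ (by exact_mod_cast hslen s hs)]
        rw [hcard]
        have h3 : s.flatten.length ≤ q * s.length := by
          rw [Nat.mul_comm]; exact hslablen s hs
        exact_mod_cast h3
      exact le_trans h1 h2
    · -- badness
      intro a b
      set p : (Fin d → ℝ) → Prop := fun x => inBox a b (k+1) x ∧
        ∃ P ∈ Pi, x ∈ P ∧ ¬ (∀ y ∈ P, inBox a b (k+1) y) with hp
      rw [filter_inst_irrel (h2 := fun x => Classical.propDecidable (p x))]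
      have hsplit := filter_card_split FL hFLnd p
      rw [hFLfin] at hsplit
      set cardj : Fin FL.length → ℕ := fun j =>
        (@Finset.filter _ p (fun x => Classical.propDecidable (p x)) (FL.get j).toFinset).card
        with hcardj
      have hFLget : ∀ j : Fin FL.length, FL.get j = (slabs.get (Fin.cast hFLlen j)).flatten := by
        intro j
        simp [hFL, List.get_eq_getElem, List.getElem_map]
      have hsmem : ∀ j : Fin FL.length, slabs.get (Fin.cast hFLlen j) ∈ slabs := by
        intro j
        exact List.get_mem _ _
      -- localization of the bad predicate to a slab
      have hloc : ∀ (j : Fin FL.length) (x : Fin d → ℝ), x ∈ (FL.get j).toFinset →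
          (p x ↔ (inBox a b (k+1) x ∧ ∃ P ∈ F (slabs.get (Fin.cast hFLlen j)), x ∈ P ∧
            ¬ (∀ y ∈ P, inBox a b (k+1) y))) := by
        intro j x hx
        constructor
        · rintro ⟨hin, P, hP, hxP, hbad⟩
          refine ⟨hin, P, ?_, hxP, hbad⟩
          obtain ⟨s, hs, hPs⟩ := (hPimem P).1 hP
          obtain ⟨i0, hi0⟩ := List.mem_iff_get.1 hs
          by_cases hij : (i0 : ℕ) = ((Fin.cast hFLlen j : Fin slabs.length) : ℕ)
          · have : slabs.get (Fin.cast hFLlen j) = s := by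
              rw [← hi0]
              congr 1
              exact (Fin.ext hij).symm
            rw [this]
            exact hPs
          · exfalso
            have hi1 : (i0 : ℕ) < FL.length := by rw [hFLlen]; exact i0.2
            have hgeti : FL.get ⟨i0, hi1⟩ = s.flatten := by
              simp only [hFL, List.get_eq_getElem, List.getElem_map]
              rw [show slabs[(i0:ℕ)] = s from by rw [← hi0]; simp [List.get_eq_getElem]]
            have hne2 : (⟨i0, hi1⟩ : Fin FL.length) ≠ j := by
              intro hcon
              apply hij
              have := congrArg Fin.val hcon
              simpa using this
            have hdisj := flatten_nodup_get_disjoint hFLnd hne2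
            rw [hgeti] at hdisj
            exact hdisj x (List.mem_toFinset.1 (hsubT s hs P hPs hxP))
              (List.mem_toFinset.1 hx)
        · rintro ⟨hin, P, hP, hxP, hbad⟩
          exact ⟨hin, P, (hPimem P).2 ⟨slabs.get (Fin.cast hFLlen j), hsmem j, hP⟩, hxP, hbad⟩
      -- cut indices
      set J := ((Finset.univ : Finset (Fin FL.length)).filter (fun j =>
        (∃ x ∈ FL.get j, a ⟨k, hkd⟩ ≤ x ⟨k, hkd⟩ ∧ x ⟨k, hkd⟩ ≤ b ⟨k, hkd⟩) ∧
        (∃ y ∈ FL.get j, ¬ (a ⟨k, hkd⟩ ≤ y ⟨k, hkd⟩ ∧ y ⟨k, hkd⟩ ≤ b ⟨k, hkd⟩)))) with hJdef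
      have hJ2 : J.card ≤ 2 := cut_card_le_two FL (fun x => x ⟨k, hkd⟩) hFLpw _ _
      have hK0 : (0:ℝ) < K := by linarith
      set e : ℝ := 1 - 1/K with he
      have he0 : 0 ≤ e := by
        rw [he]
        have : 1/K ≤ 1 := by
          rw [div_le_one hK0]; exact hK1
        linarith
      have he1 : e ≤ 1 := by
        rw [he]
        have : 0 < 1/K := div_pos one_pos hK0
        linarith
      set A : ℝ := Ck * q * (g:ℝ)^e with hA
      have hA0 : 0 ≤ A := by
        rw [hA]
        exact mul_nonneg (mul_nonneg (le_of_lt hCk) (Nat.cast_nonneg q))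
          (Real.rpow_nonneg (Nat.cast_nonneg g) e)
      have hgq : ∀ j : Fin FL.length, ((cardj j : ℕ) : ℝ) ≤ (g:ℝ) * q := by
        intro j
        have h1 : cardj j ≤ (FL.get j).toFinset.card :=
          @Finset.card_filter_le _ ((FL.get j).toFinset) p (fun x => Classical.propDecidable (p x))
        have h2 : (FL.get j).toFinset.card ≤ (FL.get j).length := List.toFinset_card_le _
        have h3 : (FL.get j).length ≤ (slabs.get (Fin.cast hFLlen j)).length * q := by
          rw [hFLget j]
          exact hslablen _ (hsmem j)
        have h4 : (slabs.get (Fin.cast hFLlen j)).length ≤ g := (hssz _ (hsmem j)).2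
        have : cardj j ≤ g * q := by
          calc cardj j ≤ (slabs.get (Fin.cast hFLlen j)).length * q := by omega
            _ ≤ g * q := Nat.mul_le_mul_right q h4
        calc ((cardj j : ℕ):ℝ) ≤ ((g*q : ℕ):ℝ) := by exact_mod_cast this
          _ = (g:ℝ)*q := by push_cast; ring
      have hgood : ∀ j ∉ J, ((cardj j : ℕ) : ℝ) ≤ A := by
        intro j hj
        by_cases hall : ∀ y ∈ FL.get j, a ⟨k, hkd⟩ ≤ y ⟨k, hkd⟩ ∧ y ⟨k, hkd⟩ ≤ b ⟨k, hkd⟩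
        · -- interior slab: use the recursive bound
          set s := slabs.get (Fin.cast hFLlen j) with hsj
          have hsm : s ∈ slabs := hsmem j
          have hhs : 1 ≤ s.length := hslen s hsm
          have key := hf6 s.flatten.toFinset s.length hhs a b
          have hTeq : (FL.get j).toFinset = s.flatten.toFinset := by rw [hFLget j]
          have hallT : ∀ y ∈ s.flatten.toFinset, a ⟨k, hkd⟩ ≤ y ⟨k, hkd⟩ ∧ y ⟨k, hkd⟩ ≤ b ⟨k, hkd⟩ := by
            intro y hy
            apply hall
            rw [hFLget j]
            exact List.mem_toFinset.1 hy
          -- the bad count for p over this slab equals the k-dimensional bad count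
          have hcardeq : cardj j = (s.flatten.toFinset.filter (fun x => inBox a b k x ∧
              ∃ P ∈ f s.flatten.toFinset s.length hhs, x ∈ P ∧
                ¬ (∀ y ∈ P, inBox a b k y))).card := by
            rw [hcardj]
            simp only
            rw [hTeq]
            congr 1
            apply filter_card_eq_of_iff
            intro x hx
            have hx' : x ∈ (FL.get j).toFinset := by rw [hTeq]; exact hx
            rw [hloc j x hx']
            rw [hFeq s hsm hhs]
            constructor
            · rintro ⟨hin, P, hP, hxP, hbad⟩
              refine ⟨((inBox_succ hkd a b x).1 hin).1, P, hP, hxP, fun hcon => hbad ?_⟩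
              intro y hy
              rw [inBox_succ hkd]
              refine ⟨hcon y hy, hallT y ?_⟩
              exact hf3 s.flatten.toFinset s.length hhs ▸ Finset.le_sup (f := id) hP hy
            · rintro ⟨hin, P, hP, hxP, hbad⟩
              refine ⟨(inBox_succ hkd a b x).2 ⟨hin, hallT x hx⟩, P, hP, hxP, fun hcon => hbad ?_⟩
              intro y hy
              exact ((inBox_succ hkd a b y).1 (hcon y hy)).1
            
          -- numeric bound
          have hnodups : s.flatten.Nodup := hmemFL s.flatten (List.mem_map.2 ⟨s, hsm, rfl⟩)
          have hTcard : (s.flatten.toFinset.card : ℝ) ≤ (s.length : ℝ) * q := by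
            rw [List.toFinset_card_of_nodup hnodups]
            exact_mod_cast hslablen s hsm
          have hL1 : (1:ℝ) ≤ (s.length:ℝ) := by exact_mod_cast hhs
          have hLpos : (0:ℝ) < (s.length:ℝ) := by linarith
          have hrpowpos : (0:ℝ) < (s.length:ℝ)^(1/K) := Real.rpow_pos_of_pos hLpos _
          have step1 : ((cardj j : ℕ):ℝ) ≤ Ck * (s.flatten.toFinset.card) / (s.length:ℝ)^(1/K) := by
            rw [hcardeq]
            exact key
          have step2 : Ck * (s.flatten.toFinset.card:ℝ) / (s.length:ℝ)^(1/K)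
              ≤ Ck * ((s.length:ℝ) * q) / (s.length:ℝ)^(1/K) := by
            have hmm := mul_le_mul_of_nonneg_left hTcard (le_of_lt hCk)
            gcongr
          have step3 : Ck * ((s.length:ℝ) * q) / (s.length:ℝ)^(1/K)
              = Ck * q * (s.length:ℝ)^e := by
            rw [he]
            rw [Real.rpow_sub hLpos, Real.rpow_one]
            field_simp
          have step4 : Ck * q * (s.length:ℝ)^e ≤ Ck * q * (g:ℝ)^e := by
            apply mul_le_mul_of_nonneg_left ?_ (mul_nonneg (le_of_lt hCk) (Nat.cast_nonneg q))
            apply Real.rpow_le_rpow (le_of_lt hLpos) ?_ he0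
            exact_mod_cast (hssz s hsm).2
          rw [hA]
          calc ((cardj j : ℕ):ℝ) ≤ Ck * (s.flatten.toFinset.card) / (s.length:ℝ)^(1/K) := step1
            _ ≤ Ck * ((s.length:ℝ) * q) / (s.length:ℝ)^(1/K) := step2
            _ = Ck * q * (s.length:ℝ)^e := step3
            _ ≤ Ck * q * (g:ℝ)^e := step4
        · -- not interior, not cut: no inside points, count is zero
          have hzero : cardj j = 0 := by
            rw [hcardj]
            simp only
            rw [Finset.card_eq_zero]
            apply Finset.eq_empty_iff_forall_notMem.2
            intro x hxmem
            obtain ⟨hx, hpx⟩ :=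
              (@Finset.mem_filter _ p (fun x => Classical.propDecidable (p x)) _ _).1 hxmem
            obtain ⟨hin, -⟩ := hpx
            have hinside := ((inBox_succ hkd a b x).1 hin).2
            push_neg at hall
            obtain ⟨y, hy, hyout⟩ := hall
            apply hj
            rw [hJdef]
            refine Finset.mem_filter.2 ⟨Finset.mem_univ _,
              ⟨x, List.mem_toFinset.1 hx, hinside⟩,
              ⟨y, hy, fun hcon => absurd hcon.2 (not_le.2 (hyout hcon.1))⟩⟩
          rw [hzero]
          simpa using hA0
      -- summing up
      have hsumR : ((@Finset.filter _ p (fun x => Classical.propDecidable (p x)) S).card : ℝ)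
          ≤ 2*((g:ℝ)*q) + (M:ℝ)*A := by
        have hcast : ((@Finset.filter _ p (fun x => Classical.propDecidable (p x)) S).card : ℝ)
            = ∑ j : Fin FL.length, ((cardj j : ℕ):ℝ) := by
          rw [hsplit]
          push_cast
          rfl
        rw [hcast]
        have hJsub : J ⊆ Finset.univ := Finset.subset_univ J
        have hsplit2 : ∑ j : Fin FL.length, ((cardj j : ℕ):ℝ)
            = ∑ j ∈ J, ((cardj j : ℕ):ℝ) + ∑ j ∈ Finset.univ \ J, ((cardj j : ℕ):ℝ) := by
          rw [add_comm, Finset.sum_sdiff hJsub]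
        rw [hsplit2]
        have h1 : ∑ j ∈ J, ((cardj j : ℕ):ℝ) ≤ 2*((g:ℝ)*q) := by
          calc ∑ j ∈ J, ((cardj j : ℕ):ℝ) ≤ ∑ _j ∈ J, (g:ℝ)*q :=
              Finset.sum_le_sum (fun j _ => hgq j)
            _ = J.card * ((g:ℝ)*q) := by rw [Finset.sum_const, nsmul_eq_mul]
            _ ≤ 2*((g:ℝ)*q) := by
                apply mul_le_mul_of_nonneg_right ?_ (mul_nonneg (Nat.cast_nonneg g) (Nat.cast_nonneg q))
                exact_mod_cast hJ2
        have h2 : ∑ j ∈ Finset.univ \ J, ((cardj j : ℕ):ℝ) ≤ (M:ℝ)*A := by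
          calc ∑ j ∈ Finset.univ \ J, ((cardj j : ℕ):ℝ) ≤ ∑ _j ∈ Finset.univ \ J, A :=
              Finset.sum_le_sum (fun j hj => hgood j (Finset.mem_sdiff.1 hj).2)
            _ = (Finset.univ \ J).card * A := by rw [Finset.sum_const, nsmul_eq_mul]
            _ ≤ (M:ℝ)*A := by
                apply mul_le_mul_of_nonneg_right ?_ hA0
                have hc1 : (Finset.univ \ J).card ≤ (Finset.univ : Finset (Fin FL.length)).card :=
                  Finset.card_le_card (Finset.sdiff_subset)
                have hc2 : (Finset.univ : Finset (Fin FL.length)).card = FL.length :=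
                  Finset.card_univ.trans (Fintype.card_fin _)
                have hc3 : FL.length ≤ M := by rw [hFLlen]; exact hscount
                exact_mod_cast le_trans hc1 (le_trans (le_of_eq hc2) hc3)
        linarith
      -- final numeric computation
      have hfin1 : 2*((g:ℝ)*q) ≤ 8 * n / ρ := by
        have h1 : (0:ℝ) ≤ g := Nat.cast_nonneg g
        have h2 : (0:ℝ) ≤ q := Nat.cast_nonneg q
        have hmul : (g:ℝ)*q ≤ (2*r/ρ)*(2*n/r) := by
          apply mul_le_mul hgρ hq2 h2 (div_nonneg (by linarith) (le_of_lt hρpos))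
        have heq : (2*(r:ℝ)/ρ)*(2*n/r) = 4*n/ρ := by
          field_simp
          ring
        rw [heq] at hmul
        have h8 : 8*(n:ℝ)/ρ = 2*(4*n/ρ) := by ring
        linarith
      have hfin2 : (M:ℝ)*A ≤ 8 * Ck * n / ρ := by
        have hgpow : (g:ℝ)^e ≤ (2*(r:ℝ)/ρ)^e :=
          Real.rpow_le_rpow (Nat.cast_nonneg g) hgρ he0
        have h2e : (2*(r:ℝ)/ρ)^e ≤ 2 * ((r:ℝ)/ρ)^e := by
          have : (2*(r:ℝ)/ρ) = 2 * ((r:ℝ)/ρ) := by ring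
          rw [this, Real.mul_rpow (by norm_num) (div_nonneg (le_of_lt hrpos) (le_of_lt hρpos))]
          apply mul_le_mul_of_nonneg_right ?_
            (Real.rpow_nonneg (div_nonneg (le_of_lt hrpos) (le_of_lt hρpos)) e)
          calc (2:ℝ)^e ≤ (2:ℝ)^(1:ℝ) := Real.rpow_le_rpow_of_exponent_le (by norm_num) he1
            _ = 2 := Real.rpow_one 2
        have hkey : ρ * ((n:ℝ)/r) * ((r:ℝ)/ρ)^e = n/ρ := by
          have e1 : (r:ℝ)/ρ = (r:ℝ)^(1-θ) := by
            rw [Real.rpow_sub hrpos, Real.rpow_one, hρ]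
          have e2 : ((r:ℝ)^(1-θ))^e = (r:ℝ)^((1-θ)*e) := (Real.rpow_mul (le_of_lt hrpos) _ _).symm
          have e3 : θ + (1-θ)*e = 1 - θ := by
            rw [hθ, he]
            field_simp
            ring
          calc ρ * ((n:ℝ)/r) * ((r:ℝ)/ρ)^e
              = (n:ℝ) * ((r:ℝ)^θ * (r:ℝ)^((1-θ)*e)) / r := by rw [e1, e2, hρ]; ring
            _ = (n:ℝ) * (r:ℝ)^(θ+(1-θ)*e) / r := by rw [Real.rpow_add hrpos]
            _ = (n:ℝ) * (r:ℝ)^(1-θ) / r := by rw [e3]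
            _ = (n:ℝ) * ((r:ℝ)/ρ) / r := by rw [← e1]
            _ = n/ρ := by field_simp
        have hchain : (M:ℝ)*A ≤ (2*ρ) * (Ck * (2*(n:ℝ)/r) * (2 * ((r:ℝ)/ρ)^e)) := by
          rw [hA]
          have hq0 : (0:ℝ) ≤ q := Nat.cast_nonneg q
          have hge0 : (0:ℝ) ≤ (g:ℝ)^e := Real.rpow_nonneg (Nat.cast_nonneg g) e
          have h2ρ0 : (0:ℝ) ≤ 2*ρ := by linarith
          have hCkq : (0:ℝ) ≤ Ck * (2*(n:ℝ)/r) := by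
            apply mul_nonneg (le_of_lt hCk)
            apply div_nonneg ?_ (le_of_lt hrpos)
            have : (0:ℝ) ≤ (n:ℝ) := Nat.cast_nonneg n
            linarith
          calc (M:ℝ) * (Ck * q * (g:ℝ)^e) ≤ (2*ρ) * (Ck * q * (g:ℝ)^e) := by
                apply mul_le_mul_of_nonneg_right hM2ρ
                exact mul_nonneg (mul_nonneg (le_of_lt hCk) hq0) hge0
            _ ≤ (2*ρ) * (Ck * (2*(n:ℝ)/r) * (g:ℝ)^e) := by
                apply mul_le_mul_of_nonneg_left ?_ h2ρ0
                apply mul_le_mul_of_nonneg_right ?_ hge0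
                apply mul_le_mul_of_nonneg_left hq2 (le_of_lt hCk)
            _ ≤ (2*ρ) * (Ck * (2*(n:ℝ)/r) * (2 * ((r:ℝ)/ρ)^e)) := by
                apply mul_le_mul_of_nonneg_left ?_ h2ρ0
                apply mul_le_mul_of_nonneg_left ?_ hCkq
                exact le_trans hgpow h2e
        have hexpand : (2*ρ) * (Ck * (2*(n:ℝ)/r) * (2 * ((r:ℝ)/ρ)^e))
            = 8 * Ck * (ρ * ((n:ℝ)/r) * ((r:ℝ)/ρ)^e) := by ring
        rw [hexpand, hkey] at hchain
        calc (M:ℝ)*A ≤ 8 * Ck * ((n:ℝ)/ρ) := hchain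
          _ = 8 * Ck * n / ρ := by ring
      have hfinal : ((@Finset.filter _ p (fun x => Classical.propDecidable (p x)) S).card : ℝ)
          ≤ (8 + 8*Ck) * n / ρ := by
        have : (8 + 8*Ck) * (n:ℝ) / ρ = 8*n/ρ + 8*Ck*n/ρ := by ring
        linarith
      have hρeq : (r:ℝ) ^ (1 / ((k+1 : ℕ):ℝ)) = ρ := by
        rw [hρ, hθ, hK]
        congr 1
        push_cast
        ring
      rw [hρeq]
      exact hfinal


end PLem

/-- Partition lemma, part (ii): for every `d ≥ 1` there is a constant `C > 0` such that
any finite set `S` of `n` points in `ℝ^d` and any `1 ≤ r ≤ n` admit a partition of `S`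
into at most `r` parts, each of size at most `⌈n/r⌉`, such that for every axis-aligned
box `B`, the number of points of `S ∩ B` lying in parts not fully contained in `B` is
at most `min {|S ∩ B|, C · n / r^(1/d)}`. -/
theorem partition_lemma_points (d : ℕ) (hd : 1 ≤ d) :
    ∃ C : ℝ, 0 < C ∧
      ∀ (S : Finset (Fin d → ℝ)) (n r : ℕ), n = S.card → 1 ≤ r → r ≤ n →
        ∃ Pi : Finset (Finset (Fin d → ℝ)),
          (∀ P ∈ Pi, P.Nonempty) ∧
          (∀ P ∈ Pi, ∀ Q ∈ Pi, P ≠ Q → Disjoint P Q) ∧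
          (Pi.sup id = S) ∧
          Pi.card ≤ r ∧
          (∀ P ∈ Pi, P.card ≤ ⌈(n : ℝ) / r⌉₊) ∧
          (∀ a b : Fin d → ℝ, (∀ i, a i ≤ b i) →
            ((S.filter (fun x =>
              (∀ i, a i ≤ x i ∧ x i ≤ b i) ∧
              ∃ P ∈ Pi, x ∈ P ∧ ¬ (∀ y ∈ P, ∀ i, a i ≤ y i ∧ y i ≤ b i))).card : ℝ) ≤
              min ((S.filter (fun x => ∀ i, a i ≤ x i ∧ x i ≤ b i)).card : ℝ)
                (C * (n : ℝ) / (r : ℝ) ^ (1 / (d : ℝ)))) := by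
  have hQ : ∀ k, 1 ≤ k → k ≤ d → PLem.Q d k := by
    intro k
    induction k with
    | zero => intro h; omega
    | succ m ihm =>
      intro _ hmd
      rcases Nat.eq_zero_or_pos m with hm | hm
      · subst hm
        exact PLem.base (by omega)
      · exact PLem.step hm (by omega) (ihm hm (by omega))
  obtain ⟨C, hC, hmain⟩ := hQ d hd le_rfl
  refine ⟨C, hC, ?_⟩
  intro S n r hn hr hrn
  subst hn
  obtain ⟨Pi, h1, h2, h3, h4, h5, h6⟩ := hmain S r hr
  refine ⟨Pi, h1, h2, h3, h4, h5, ?_⟩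
  intro a b _hab
  have hib : ∀ x : Fin d → ℝ, PLem.inBox a b d x ↔ (∀ i, a i ≤ x i ∧ x i ≤ b i) :=
    fun x => ⟨fun h i => h i i.isLt, fun h i _ => h i⟩
  refine le_min ?_ ?_
  · apply Nat.cast_le.2
    apply Finset.card_le_card
    intro x hx
    obtain ⟨hxS, hin, -⟩ := Finset.mem_filter.1 hx
    exact Finset.mem_filter.2 ⟨hxS, hin⟩
  · have heq : (S.filter (fun x =>
        (∀ i, a i ≤ x i ∧ x i ≤ b i) ∧
        ∃ P ∈ Pi, x ∈ P ∧ ¬ (∀ y ∈ P, ∀ i, a i ≤ y i ∧ y i ≤ b i)))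
        = (S.filter (fun x => PLem.inBox a b d x ∧
            ∃ P ∈ Pi, x ∈ P ∧ ¬ (∀ y ∈ P, PLem.inBox a b d y))) := by
      apply PLem.filter_card_eq_of_iff
      intro x _
      constructor
      · rintro ⟨hin, P, hP, hxP, hbad⟩
        exact ⟨(hib x).2 hin, P, hP, hxP, fun hcon => hbad (fun y hy => (hib y).1 (hcon y hy))⟩
      · rintro ⟨hin, P, hP, hxP, hbad⟩
        exact ⟨(hib x).1 hin, P, hP, hxP, fun hcon => hbad (fun y hy => (hib y).2 (hcon y hy))⟩
    rw [heq]
    exact h6 a b
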